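/- Let G = (V,E) be a finite graph, p ∈ (0,1), and set β = −log(1−p)/2 (equivalently p = 1 − e^{−2β}). Let P^p be the Edwards–Sokal coupling measure on {-1,+1}^V × {0,1}^E. Then (i) the marginal of P^p on {-1,+1}^V is the Ising measure μ^{β,0}: for every σ, Σ_η P^p(σ,η) = μ^{β,0}(σ); and (ii) the marginal of P^p on {0,1}^E is the q=2 random-cluster measure ν^p: for every η, Σ_σ P^p(σ,η) = ν^p(η). -/

import Mathlib

/-!
The Edwards–Sokal coupling of the Ising measure (β = -log(1-p)/2, zero external field)
and the q = 2 random-cluster measure on a finite graph. Spins are `σ : V → Bool`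
(`true` = `+1`, `false` = `-1`); edge configurations are `η : G.edgeSet → Bool`.
-/

open Finset

/-- The `±1` value of a spin. -/
def spin (b : Bool) : ℝ := if b then 1 else -1

/-- The interaction energy `σ(t)σ(t')` of an (unordered) edge. -/
def edgeTerm {V : Type*} (σ : V → Bool) : Sym2 V → ℝ :=
  Sym2.lift ⟨fun a b => spin (σ a) * spin (σ b), fun a b => by ring⟩

/-- The Ising weight with zero external field: `μ^{β,0}(σ) ∝ exp (β ∑_{{t,t'} ∈ E} σ(t)σ(t'))`. -/
noncomputable def isingWeight {V : Type*} [DecidableEq V] [Fintype V] (G : SimpleGraph V)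
    [DecidableRel G.Adj] (β : ℝ) (σ : V → Bool) : ℝ :=
  Real.exp (β * ∑ e ∈ G.edgeFinset, edgeTerm σ e) /
    ∑ τ : V → Bool, Real.exp (β * ∑ e ∈ G.edgeFinset, edgeTerm τ e)

/-- The spanning subgraph of `G` consisting of the `η`-open edges. -/
def openGraph {V : Type*} (G : SimpleGraph V) (η : G.edgeSet → Bool) : SimpleGraph V :=
  SimpleGraph.fromEdgeSet {f : Sym2 V | ∃ hf : f ∈ G.edgeSet, η ⟨f, hf⟩ = true}

/-- `k(η)`: the number of connected components (isolated vertices included) of the spanning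
subgraph of `η`-open edges. -/
noncomputable def numComponents {V : Type*} (G : SimpleGraph V) (η : G.edgeSet → Bool) : ℕ :=
  Nat.card (openGraph G η).ConnectedComponent

/-- The (unnormalized) q = 2 random-cluster weight `2^{k(η)} ∏_e p^{η(e)} (1-p)^{1-η(e)}`. -/
noncomputable def rcNum {V : Type*} [DecidableEq V] [Fintype V] (G : SimpleGraph V)
    [DecidableRel G.Adj] (p : ℝ) (η : G.edgeSet → Bool) : ℝ :=
  2 ^ numComponents G η * ∏ e : G.edgeSet, (if η e then p else 1 - p)

/-- The q = 2 random-cluster measure `ν^p` on `{0,1}^E`. -/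
noncomputable def rcWeight {V : Type*} [DecidableEq V] [Fintype V] (G : SimpleGraph V)
    [DecidableRel G.Adj] (p : ℝ) (η : G.edgeSet → Bool) : ℝ :=
  rcNum G p η / ∑ η' : G.edgeSet → Bool, rcNum G p η'

/-- `(σ, η)` is compatible: no open edge joins two sites with different spins. -/
def Compatible {V : Type*} (G : SimpleGraph V) (σ : V → Bool) (η : G.edgeSet → Bool) : Prop :=
  ∀ e : G.edgeSet, η e = true → ∀ x ∈ (e : Sym2 V), ∀ y ∈ (e : Sym2 V), σ x = σ y

open scoped Classical in
/-- The (unnormalized) Edwards–Sokal weight of `(σ, η)`. -/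
noncomputable def esNum {V : Type*} [DecidableEq V] [Fintype V] (G : SimpleGraph V)
    [DecidableRel G.Adj] (p : ℝ) (σ : V → Bool) (η : G.edgeSet → Bool) : ℝ :=
  (∏ e : G.edgeSet, (if η e then p else 1 - p)) * (if Compatible G σ η then 1 else 0)

/-- The Edwards–Sokal coupling measure `P^p` on `{-1,+1}^V × {0,1}^E`. -/
noncomputable def esWeight {V : Type*} [DecidableEq V] [Fintype V] (G : SimpleGraph V)
    [DecidableRel G.Adj] (p : ℝ) (σ : V → Bool) (η : G.edgeSet → Bool) : ℝ :=
  esNum G p σ η /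
    ∑ σ' : V → Bool, ∑ η' : G.edgeSet → Bool, esNum G p σ' η'

section Aux

variable {V : Type*} [DecidableEq V] [Fintype V] (G : SimpleGraph V) [DecidableRel G.Adj]

/-- Agreement of spins on a `Sym2` pair. -/
private lemma agr_iff (σ : V → Bool) (a b : V) :
    (∀ x ∈ s(a, b), ∀ y ∈ s(a, b), σ x = σ y) ↔ σ a = σ b := by
  constructor
  · intro h
    exact h a (by simp) b (by simp)
  · intro h x hx y hy
    rw [Sym2.mem_iff] at hx hy
    rcases hx with rfl | rfl <;> rcases hy with rfl | rfl <;>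
      first | rfl | exact h | exact h.symm

open scoped Classical in
private lemma edgeTerm_eq (σ : V → Bool) (e : Sym2 V) :
    edgeTerm σ e = if (∀ x ∈ e, ∀ y ∈ e, σ x = σ y) then 1 else -1 := by
  induction e using Sym2.ind with
  | _ a b =>
    rw [show (if (∀ x ∈ s(a,b), ∀ y ∈ s(a,b), σ x = σ y) then (1:ℝ) else -1)
        = if σ a = σ b then 1 else -1 by
      by_cases h : σ a = σ b <;> simp [agr_iff, h]]
    cases ha : σ a <;> cases hb : σ b <;> simp [edgeTerm, spin, ha, hb]

open scoped Classical in
private lemma esNum_eq_prod (p : ℝ) (σ : V → Bool) (η : G.edgeSet → Bool) :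
    esNum G p σ η = ∏ e : G.edgeSet,
      (if η e then (if (∀ x ∈ (e : Sym2 V), ∀ y ∈ (e : Sym2 V), σ x = σ y) then p else 0)
        else 1 - p) := by
  by_cases h : Compatible G σ η
  · simp only [esNum, if_pos h, mul_one]
    refine Finset.prod_congr rfl fun e _ => ?_
    by_cases hb : η e
    · rw [if_pos hb, if_pos hb, if_pos (h e hb)]
    · rw [if_neg hb, if_neg hb]
  · simp only [esNum, if_neg h, mul_zero]
    symm
    simp only [Compatible, not_forall] at h
    obtain ⟨e, he, hne⟩ := h
    obtain ⟨x, hx, y, hy, hxy⟩ := hne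
    refine Finset.prod_eq_zero (Finset.mem_univ e) ?_
    rw [if_pos he, if_neg]
    intro hA
    exact hxy (hA x hx y hy)

open scoped Classical in
private lemma sum_esNum_eta (p : ℝ) (σ : V → Bool) :
    ∑ η : G.edgeSet → Bool, esNum G p σ η
      = ∏ e : G.edgeSet,
        (if (∀ x ∈ (e : Sym2 V), ∀ y ∈ (e : Sym2 V), σ x = σ y) then 1 else 1 - p) := by
  rw [Finset.sum_congr rfl fun η _ => esNum_eq_prod G p σ η]
  have key := Finset.prod_univ_sum (fun _ : G.edgeSet => (Finset.univ : Finset Bool))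
    (fun e b => if b then
        (if (∀ x ∈ (e : Sym2 V), ∀ y ∈ (e : Sym2 V), σ x = σ y) then p else 0) else 1 - p)
  rw [Fintype.piFinset_univ] at key
  rw [← key]
  refine Finset.prod_congr rfl fun e _ => ?_
  rw [Fintype.sum_bool]
  by_cases h : (∀ x ∈ (e : Sym2 V), ∀ y ∈ (e : Sym2 V), σ x = σ y)
  · simp only [if_pos h]; norm_num
  · simp only [if_neg h]; norm_num

open scoped Classical in
private lemma sum_esNum_eta' (p : ℝ) (hp : p ∈ Set.Ioo (0 : ℝ) 1) (β : ℝ)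
    (hβ : β = -Real.log (1 - p) / 2) (σ : V → Bool) :
    ∑ η : G.edgeSet → Bool, esNum G p σ η
      = Real.sqrt (1 - p) ^ Fintype.card G.edgeSet *
        Real.exp (β * ∑ e ∈ G.edgeFinset, edgeTerm σ e) := by
  have h1 : (0 : ℝ) < 1 - p := by linarith [hp.2]
  rw [sum_esNum_eta]
  have hsum : ∑ e ∈ G.edgeFinset, edgeTerm σ e = ∑ e : G.edgeSet, edgeTerm σ (e : Sym2 V) :=
    Finset.sum_subtype _ (by simp) _
  rw [hsum, Finset.mul_sum, Real.exp_sum, ← Finset.card_univ, ← Finset.prod_const,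
    ← Finset.prod_mul_distrib]
  refine Finset.prod_congr rfl fun e _ => ?_
  rw [edgeTerm_eq]
  by_cases h : (∀ x ∈ (e : Sym2 V), ∀ y ∈ (e : Sym2 V), σ x = σ y)
  · rw [if_pos h, if_pos h, mul_one]
    have hb : β = Real.log (1 - p) * (-(1 / 2)) := by rw [hβ]; ring
    rw [hb, ← Real.rpow_def_of_pos h1, Real.sqrt_eq_rpow, ← Real.rpow_add h1]
    norm_num
  · rw [if_neg h, if_neg h]
    have hb : β * (-1) = Real.log (1 - p) * (1 / 2) := by rw [hβ]; ring
    rw [hb, ← Real.rpow_def_of_pos h1, Real.sqrt_eq_rpow, ← Real.rpow_add h1]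
    norm_num

private lemma compat_count (η : G.edgeSet → Bool) :
    Nat.card {σ : V → Bool // Compatible G σ η} = 2 ^ numComponents G η := by
  classical
  set H := openGraph G η with hH
  have hadj : ∀ (σ : V → Bool), Compatible G σ η → ∀ a b, H.Adj a b → σ a = σ b := by
    intro σ hσ a b hab
    rw [hH, openGraph, SimpleGraph.fromEdgeSet_adj] at hab
    obtain ⟨⟨hf, hη⟩, hne⟩ := hab
    exact hσ ⟨s(a, b), hf⟩ hη a (by simp) b (by simp)
  have hreach : ∀ (σ : V → Bool), Compatible G σ η → ∀ a b, H.Reachable a b → σ a = σ b := by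
    intro σ hσ a b hr
    obtain ⟨w⟩ := hr
    induction w with
    | nil => rfl
    | cons h p ih => exact (hadj σ hσ _ _ h).trans ih
  have hcompat : ∀ f : H.ConnectedComponent → Bool,
      Compatible G (fun v => f (H.connectedComponentMk v)) η := by
    intro f e he x hx y hy
    by_cases hxy : x = y
    · rw [hxy]
    · have hexy : (e : Sym2 V) = s(x, y) := (Sym2.mem_and_mem_iff hxy).1 ⟨hx, hy⟩
      have hmem : s(x, y) ∈ G.edgeSet := hexy ▸ e.2
      have he' : η ⟨s(x, y), hmem⟩ = true := by
        have : (⟨s(x, y), hmem⟩ : G.edgeSet) = e := Subtype.ext hexy.symm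
        rw [this]; exact he
      have hadjxy : H.Adj x y := by
        rw [hH, openGraph, SimpleGraph.fromEdgeSet_adj]
        exact ⟨⟨hmem, he'⟩, hxy⟩
      simp only
      rw [SimpleGraph.ConnectedComponent.sound hadjxy.reachable]
  have equiv : {σ : V → Bool // Compatible G σ η} ≃ (H.ConnectedComponent → Bool) :=
    { toFun := fun σ => SimpleGraph.ConnectedComponent.lift σ.1
        (fun v w p _ => hreach σ.1 σ.2 v w ⟨p⟩)
      invFun := fun f => ⟨fun v => f (H.connectedComponentMk v), hcompat f⟩
      left_inv := fun σ => Subtype.ext (funext fun v => rfl)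
      right_inv := fun f => funext fun c => by
        induction c using SimpleGraph.ConnectedComponent.ind with
        | _ v => rfl }
  rw [Nat.card_congr equiv, Nat.card_fun, numComponents]
  simp [Nat.card_eq_fintype_card]
  exact Fintype.card_congr' rfl

private lemma sum_esNum_sigma (p : ℝ) (η : G.edgeSet → Bool) :
    ∑ σ : V → Bool, esNum G p σ η = rcNum G p η := by
  classical
  simp only [esNum, ← Finset.mul_sum]
  rw [Finset.sum_boole]
  have hcard : (Finset.filter (fun σ => Compatible G σ η) Finset.univ).card
      = 2 ^ numComponents G η := by
    rw [← Fintype.card_subtype, ← Nat.card_eq_fintype_card]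
    exact compat_count G η
  rw [hcard, rcNum]
  push_cast
  ring

end Aux

theorem edwards_sokal_marginals {V : Type*} [DecidableEq V] [Fintype V] (G : SimpleGraph V)
    [DecidableRel G.Adj] (p : ℝ) (hp : p ∈ Set.Ioo (0 : ℝ) 1) (β : ℝ)
    (hβ : β = -Real.log (1 - p) / 2) :
    (∀ σ : V → Bool, ∑ η : G.edgeSet → Bool, esWeight G p σ η = isingWeight G β σ) ∧
    (∀ η : G.edgeSet → Bool, ∑ σ : V → Bool, esWeight G p σ η = rcWeight G p η) := by
  classical
  have h1 : (0 : ℝ) < 1 - p := by linarith [hp.2]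
  have hspos : (0 : ℝ) < Real.sqrt (1 - p) := Real.sqrt_pos.2 h1
  set m := Fintype.card G.edgeSet with hm
  have hA : ∀ σ : V → Bool, ∑ η : G.edgeSet → Bool, esNum G p σ η
      = Real.sqrt (1 - p) ^ m * Real.exp (β * ∑ e ∈ G.edgeFinset, edgeTerm σ e) :=
    fun σ => sum_esNum_eta' G p hp β hβ σ
  have hB : ∀ η : G.edgeSet → Bool, ∑ σ : V → Bool, esNum G p σ η = rcNum G p η :=
    sum_esNum_sigma G p
  have hD1 : ∑ σ' : V → Bool, ∑ η' : G.edgeSet → Bool, esNum G p σ' η'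
      = Real.sqrt (1 - p) ^ m *
        ∑ τ : V → Bool, Real.exp (β * ∑ e ∈ G.edgeFinset, edgeTerm τ e) := by
    rw [Finset.mul_sum]
    exact Finset.sum_congr rfl fun σ _ => hA σ
  have hD2 : ∑ σ' : V → Bool, ∑ η' : G.edgeSet → Bool, esNum G p σ' η'
      = ∑ η' : G.edgeSet → Bool, rcNum G p η' := by
    rw [Finset.sum_comm]
    exact Finset.sum_congr rfl fun η' _ => hB η'
  constructor
  · intro σ
    simp only [esWeight]
    rw [← Finset.sum_div, hA σ, hD1, isingWeight,
      mul_div_mul_left _ _ (pow_ne_zero m hspos.ne')]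
  · intro η
    simp only [esWeight]
    rw [← Finset.sum_div, hB η, hD2, rcWeight]
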